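/- In the setting of Lemma 3.4 (H = ⟨C, a⟩ with C ∩ ⟨a⟩ = 1, a normalizing C and conjugation by a order-preserving on C), if additionally a E a⁻¹ = E for every <-convex subgroup E of C, then the convex subgroups of H under the constructed right-order ≺ are exactly {1} and the subgroups ⟨a, E⟩ where E is a convex subgroup of C. -/

import Mathlib

variable {G : Type*} [Group G]

/-- A right order on a group: a strict total order invariant under right multiplication. -/
def IsRightOrder (r : G → G → Prop) : Prop :=
  IsStrictTotalOrder G r ∧ ∀ f g h : G, r f g → r (f * h) (g * h)

/-- `a` is the least element greater than the identity for the order `r`. -/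
def LeastPos (r : G → G → Prop) (a : G) : Prop :=
  r 1 a ∧ ∀ g : G, r 1 g → g = a ∨ r a g

/-- `E` is a convex subgroup of `C` with respect to the order `r`. -/
def ConvexSubgroupOf (r : G → G → Prop) (C E : Subgroup G) : Prop :=
  E ≤ C ∧ ∀ x y z : G, x ∈ E → z ∈ E → y ∈ C → r x y → r y z → y ∈ E

/-- The subgroup `H = ⟨C, a⟩`. -/
def Hsub (C : Subgroup G) (a : G) : Subgroup G :=
  C ⊔ Subgroup.zpowers a

/-- The constructed right order `≺` on `H = ⟨C, a⟩`, via the positive cone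
`P = {aⁿc : c ∈ C, with 1 < c, or c = 1 and n > 0}`. -/
def ConstructedOrder (r : G → G → Prop) (C : Subgroup G) (a : G) :
    Hsub C a → Hsub C a → Prop :=
  fun x y => ∃ (n : ℤ) (c : G), c ∈ C ∧ ((y * x⁻¹ : Hsub C a) : G) = a ^ n * c ∧
    (r 1 c ∨ (c = 1 ∧ 0 < n))

lemma aux_conj_mem (a : G) (C : Subgroup G)
    (h1 : ∀ c ∈ C, a * c * a⁻¹ ∈ C) (h2 : ∀ c ∈ C, a⁻¹ * c * a ∈ C) :
    ∀ k : ℤ, ∀ c ∈ C, a ^ k * c * a ^ (-k) ∈ C := by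
  intro k
  induction k using Int.induction_on with
  | zero => intro c hc; simpa using hc
  | succ n ih =>
      intro c hc
      have := h1 _ (ih c hc)
      convert this using 1
      group
  | pred n ih =>
      intro c hc
      have := h2 _ (ih c hc)
      convert this using 1
      group

lemma aux_conj_r (r : G → G → Prop) (a : G) (C : Subgroup G)
    (h1 : ∀ c ∈ C, a * c * a⁻¹ ∈ C) (h2 : ∀ c ∈ C, a⁻¹ * c * a ∈ C)
    (hc1 : ∀ c ∈ C, ∀ c' ∈ C, (r c c' ↔ r (a * c * a⁻¹) (a * c' * a⁻¹)))
    (hc2 : ∀ c ∈ C, ∀ c' ∈ C, (r c c' ↔ r (a⁻¹ * c * a) (a⁻¹ * c' * a))) :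
    ∀ k : ℤ, ∀ c ∈ C, ∀ c' ∈ C,
      (r c c' ↔ r (a ^ k * c * a ^ (-k)) (a ^ k * c' * a ^ (-k))) := by
  intro k
  induction k using Int.induction_on with
  | zero => intro c hc c' hc'; simp
  | succ n ih =>
      intro c hc c' hc'
      rw [ih c hc c' hc',
        hc1 _ (aux_conj_mem a C h1 h2 n c hc) _ (aux_conj_mem a C h1 h2 n c' hc')]
      have e : ∀ x : G, a * (a ^ (n : ℤ) * x * a ^ (-(n : ℤ))) * a⁻¹
          = a ^ ((n : ℤ) + 1) * x * a ^ (-((n : ℤ) + 1)) := fun x => by group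
      rw [e c, e c']
  | pred n ih =>
      intro c hc c' hc'
      rw [ih c hc c' hc',
        hc2 _ (aux_conj_mem a C h1 h2 (-n) c hc) _ (aux_conj_mem a C h1 h2 (-n) c' hc')]
      have e : ∀ x : G, a⁻¹ * (a ^ (-(n : ℤ)) * x * a ^ (-(-(n : ℤ)))) * a
          = a ^ (-(n : ℤ) - 1) * x * a ^ (-(-(n : ℤ) - 1)) := fun x => by group
      rw [e c, e c']

lemma aux_mem_sup (a : G) (D : Subgroup G)
    (h1 : ∀ c ∈ D, a * c * a⁻¹ ∈ D) (h2 : ∀ c ∈ D, a⁻¹ * c * a ∈ D) (h : G) :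
    h ∈ Subgroup.zpowers a ⊔ D ↔ ∃ n : ℤ, ∃ c ∈ D, h = a ^ n * c := by
  constructor
  · intro hh
    let S : Subgroup G :=
      { carrier := {h | ∃ n : ℤ, ∃ c ∈ D, h = a ^ n * c}
        one_mem' := ⟨0, 1, D.one_mem, by simp⟩
        mul_mem' := by
          rintro x y ⟨n, c, hc, rfl⟩ ⟨m, d, hd, rfl⟩
          refine ⟨n + m, (a ^ (-m) * c * a ^ (-(-m))) * d,
            mul_mem (aux_conj_mem a D h1 h2 (-m) c hc) hd, ?_⟩
          group
        inv_mem' := by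
          rintro x ⟨n, c, hc, rfl⟩
          refine ⟨-n, a ^ n * c⁻¹ * a ^ (-n),
            aux_conj_mem a D h1 h2 n c⁻¹ (inv_mem hc), ?_⟩
          group }
    have hle : Subgroup.zpowers a ⊔ D ≤ S := by
      apply sup_le
      · intro g hg
        obtain ⟨k, rfl⟩ := hg
        exact ⟨k, 1, D.one_mem, by simp⟩
      · intro g hg
        exact ⟨0, g, hg, by simp⟩
    exact hle hh
  · rintro ⟨n, c, hc, rfl⟩
    exact mul_mem (Subgroup.mem_sup_left (Subgroup.zpow_mem_zpowers a n))
      (Subgroup.mem_sup_right hc)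

lemma aux_pos_pow (r : G → G → Prop) (hr : IsRightOrder r) {g : G} (hg : r 1 g) :
    ∀ n : ℕ, r 1 (g ^ (n + 1)) := by
  intro n
  induction n with
  | zero => simpa using hg
  | succ k ih =>
      have h2 := hr.2 1 g (g ^ (k + 1)) hg
      simp only [one_mul] at h2
      have h3 : g * g ^ (k + 1) = g ^ (k + 2) := (pow_succ' g (k + 1)).symm
      rw [h3] at h2
      exact hr.1.trans _ _ _ ih h2

lemma aux_ntorsion (r : G → G → Prop) (hr : IsRightOrder r) {g : G} (hg : g ≠ 1) :
    ∀ k : ℤ, g ^ k = 1 → k = 0 := by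
  have key : ∀ h : G, r 1 h → ∀ n : ℕ, h ^ (n + 1) ≠ 1 := by
    intro h hh n he
    exact hr.1.irrefl 1 (he ▸ aux_pos_pow r hr hh n)
  intro k hk
  by_contra hk0
  have hna : 1 ≤ k.natAbs := by omega
  have hpow : g ^ k.natAbs = 1 := by
    rcases Int.natAbs_eq k with h | h
    · have : g ^ (k.natAbs : ℤ) = 1 := by rw [← h]; exact hk
      simpa [zpow_natCast] using this
    · have : g ^ (k.natAbs : ℤ) = 1 := by
        rw [show (k.natAbs : ℤ) = -k by omega, zpow_neg, hk]; simp
      simpa [zpow_natCast] using this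
  have hpowinv : g⁻¹ ^ k.natAbs = 1 := by
    rw [inv_pow, hpow]; simp
  rcases @trichotomous_of _ r hr.1.toTrichotomous 1 g with h1 | h1 | h1
  · apply key g h1 (k.natAbs - 1)
    rwa [Nat.sub_add_cancel hna]
  · exact hg h1.symm
  · have h2 : r 1 g⁻¹ := by
      have := hr.2 g 1 g⁻¹ h1
      simpa using this
    apply key g⁻¹ h2 (k.natAbs - 1)
    rwa [Nat.sub_add_cancel hna]

lemma aux_unique (a : G) (hainf : ∀ k : ℤ, a ^ k = 1 → k = 0) (C : Subgroup G)
    (hint : C ⊓ Subgroup.zpowers a = ⊥) {n m : ℤ} {c d : G} (hc : c ∈ C) (hd : d ∈ C)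
    (h : a ^ n * c = a ^ m * d) : n = m ∧ c = d := by
  have h1 : a ^ (n - m) = d * c⁻¹ := by
    have : a ^ (-m) * (a ^ n * c) * c⁻¹ = a ^ (-m) * (a ^ m * d) * c⁻¹ := by rw [h]
    calc a ^ (n - m) = a ^ (-m) * (a ^ n * c) * c⁻¹ := by group
    _ = a ^ (-m) * (a ^ m * d) * c⁻¹ := this
    _ = d * c⁻¹ := by group
  have h2 : d * c⁻¹ ∈ C ⊓ Subgroup.zpowers a := by
    rw [Subgroup.mem_inf]
    refine ⟨mul_mem hd (inv_mem hc), ?_⟩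
    rw [← h1]; exact Subgroup.zpow_mem_zpowers a _
  rw [hint, Subgroup.mem_bot] at h2
  have h3 : a ^ (n - m) = 1 := by rw [h1, h2]
  have h4 : n = m := by have := hainf _ h3; omega
  rw [h4] at h
  exact ⟨h4, mul_left_cancel h⟩


theorem stmt11 (r : G → G → Prop) (hr : IsRightOrder r)
    (C : Subgroup G) (a : G) (ha : a ≠ 1)
    (hint : C ⊓ Subgroup.zpowers a = ⊥)
    (hnorm : ∀ c ∈ C, a * c * a⁻¹ ∈ C)
    (hnorm' : ∀ c ∈ C, a⁻¹ * c * a ∈ C)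
    (hconj : ∀ c ∈ C, ∀ c' ∈ C, (r c c' ↔ r (a * c * a⁻¹) (a * c' * a⁻¹)))
    (hconj' : ∀ c ∈ C, ∀ c' ∈ C, (r c c' ↔ r (a⁻¹ * c * a) (a⁻¹ * c' * a)))
    (hconvfix : ∀ E : Subgroup G, ConvexSubgroupOf r C E →
      ∀ c : G, c ∈ E ↔ a * c * a⁻¹ ∈ E) :
    ∀ K : Subgroup (Hsub C a),
      (∀ x y z : Hsub C a, x ∈ K → z ∈ K →
          ConstructedOrder r C a x y → ConstructedOrder r C a y z → y ∈ K) ↔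
      (K = ⊥ ∨ ∃ E : Subgroup G, ConvexSubgroupOf r C E ∧
        Subgroup.map (Hsub C a).subtype K = Subgroup.zpowers a ⊔ E) := by
  have hainf := aux_ntorsion r hr (g := a) ha
  have conjmem := aux_conj_mem a C hnorm hnorm'
  have conjr := aux_conj_r r a C hnorm hnorm' hconj hconj'
  have huniq := fun {n m : ℤ} {c d : G} (hc : c ∈ C) (hd : d ∈ C)
    (h : a ^ n * c = a ^ m * d) => aux_unique a hainf C hint hc hd h
  have hmem : ∀ h : G, h ∈ Hsub C a ↔ ∃ n : ℤ, ∃ c ∈ C, h = a ^ n * c := by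
    intro h
    show h ∈ C ⊔ Subgroup.zpowers a ↔ _
    rw [sup_comm]
    exact aux_mem_sup a C hnorm hnorm' h
  have haH : a ∈ Hsub C a :=
    Subgroup.mem_sup_right (Subgroup.mem_zpowers a)
  set a' : Hsub C a := ⟨a, haH⟩ with ha'
  have hord : ∀ x y : Hsub C a, ConstructedOrder r C a x y ↔
      ∃ n : ℤ, ∃ c ∈ C, (y : G) * (x : G)⁻¹ = a ^ n * c ∧
        (r 1 c ∨ (c = 1 ∧ 0 < n)) := by
    intro x y
    unfold ConstructedOrder
    push_cast
    constructor
    · rintro ⟨n, c, hc, he, hp⟩; exact ⟨n, c, hc, he, hp⟩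
    · rintro ⟨n, c, hc, he, hp⟩; exact ⟨n, c, hc, he, hp⟩
  -- r 1 c is preserved by conjugation by a^k
  have hconj1 : ∀ k : ℤ, ∀ c ∈ C, (r 1 c ↔ r 1 (a ^ k * c * a ^ (-k))) := by
    intro k c hc
    have := conjr k 1 C.one_mem c hc
    rwa [show a ^ k * 1 * a ^ (-k) = 1 by group] at this
  intro K
  constructor
  · -- forward direction
    intro hK
    by_cases hbot : K = ⊥
    · exact Or.inl hbot
    right
    -- find a positive nontrivial element of K
    obtain ⟨g0, hg0K, hg01⟩ : ∃ g : Hsub C a, g ∈ K ∧ g ≠ 1 := by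
      by_contra hcon
      push_neg at hcon
      exact hbot ((Subgroup.eq_bot_iff_forall K).2 hcon)
    obtain ⟨g, hgK, n, c, hc, hgeq, hpos⟩ :
        ∃ g : Hsub C a, g ∈ K ∧ ∃ n : ℤ, ∃ c ∈ C, (g : G) = a ^ n * c ∧
          (r 1 c ∨ (c = 1 ∧ 0 < n)) := by
      obtain ⟨n, c, hc, hgeq⟩ := (hmem (g0 : G)).1 g0.2
      rcases @trichotomous_of _ r hr.1.toTrichotomous 1 c with h1 | h1 | h1
      · exact ⟨g0, hg0K, n, c, hc, hgeq, Or.inl h1⟩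
      · -- c = 1, so g0 = a^n with n ≠ 0
        have hn0 : n ≠ 0 := by
          intro hn
          apply hg01
          apply Subtype.ext
          rw [hgeq, ← h1, hn]; simp
        rcases lt_or_gt_of_ne hn0 with hn | hn
        · refine ⟨g0⁻¹, inv_mem hg0K, -n, 1, C.one_mem, ?_, Or.inr ⟨rfl, by omega⟩⟩
          have : ((g0⁻¹ : Hsub C a) : G) = (g0 : G)⁻¹ := rfl
          rw [this, hgeq, ← h1]; group
        · exact ⟨g0, hg0K, n, c, hc, hgeq, Or.inr ⟨h1.symm, hn⟩⟩
      · -- r c 1 : use g0⁻¹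
        refine ⟨g0⁻¹, inv_mem hg0K, -n, a ^ n * c⁻¹ * a ^ (-n),
          conjmem n c⁻¹ (inv_mem hc), ?_, Or.inl ?_⟩
        · have : ((g0⁻¹ : Hsub C a) : G) = (g0 : G)⁻¹ := rfl
          rw [this, hgeq]; group
        · rw [← hconj1 n c⁻¹ (inv_mem hc)]
          have := hr.2 c 1 c⁻¹ h1
          simpa using this
    -- a' ∈ K
    have haK : a' ∈ K := by
      by_cases hga : g = a'
      · rw [← hga]; exact hgK
      · refine hK 1 a' g (one_mem K) hgK ?_ ?_
        · rw [hord]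
          exact ⟨1, 1, C.one_mem, by push_cast; group; rfl, Or.inr ⟨rfl, one_pos⟩⟩
        · rw [hord]
          rcases hpos with h1 | ⟨h1, h2⟩
          · refine ⟨n - 1, a * c * a⁻¹, hnorm c hc, ?_, Or.inl ?_⟩
            · show (g : G) * a⁻¹ = _
              rw [hgeq]; group
            · have := (hconj 1 C.one_mem c hc).1 h1
              simpa using this
          · -- c = 1, 0 < n
            subst h1
            have hn1 : n ≠ 1 := by
              intro hn
              apply hga
              apply Subtype.ext
              rw [hgeq, hn]; simp; rfl
            refine ⟨n - 1, 1, C.one_mem, ?_, Or.inr ⟨rfl, by omega⟩⟩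
            show (g : G) * a⁻¹ = _
            rw [hgeq]; group
    refine ⟨C ⊓ Subgroup.map (Hsub C a).subtype K, ⟨inf_le_left, ?_⟩, ?_⟩
    · -- convexity of E = C ⊓ map K
      intro x y z hx hz hyC hxy hyz
      rw [Subgroup.mem_inf] at hx hz
      obtain ⟨x', hx'K, hx'e⟩ := Subgroup.mem_map.1 hx.2
      obtain ⟨z', hz'K, hz'e⟩ := Subgroup.mem_map.1 hz.2
      have hyH : y ∈ Hsub C a := Subgroup.mem_sup_left hyC
      have hy' : (⟨y, hyH⟩ : Hsub C a) ∈ K := by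
        refine hK x' ⟨y, hyH⟩ z' hx'K hz'K ?_ ?_
        · rw [hord]
          refine ⟨0, y * x⁻¹, mul_mem hyC (inv_mem hx.1), ?_, Or.inl ?_⟩
          · have : ((x' : Hsub C a) : G) = x := hx'e
            rw [this]; group
          · have := hr.2 x y x⁻¹ hxy
            simpa using this
        · rw [hord]
          refine ⟨0, z * y⁻¹, mul_mem hz.1 (inv_mem hyC), ?_, Or.inl ?_⟩
          · have : ((z' : Hsub C a) : G) = z := hz'e
            rw [this]; group
          · have := hr.2 y z y⁻¹ hyz
            simpa using this
      exact Subgroup.mem_inf.2 ⟨hyC, Subgroup.mem_map.2 ⟨⟨y, hyH⟩, hy', rfl⟩⟩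
    · -- map K = zpowers a ⊔ (C ⊓ map K)
      have hamap : a ∈ Subgroup.map (Hsub C a).subtype K :=
        Subgroup.mem_map.2 ⟨a', haK, rfl⟩
      apply le_antisymm
      · intro h hh
        obtain ⟨h', hh'K, rfl⟩ := Subgroup.mem_map.1 hh
        obtain ⟨m, d, hd, heq⟩ := (hmem (h' : G)).1 h'.2
        have hmap' : ((Hsub C a).subtype h') ∈ Subgroup.map (Hsub C a).subtype K :=
          Subgroup.mem_map.2 ⟨h', hh'K, rfl⟩
        have hdmap : d ∈ Subgroup.map (Hsub C a).subtype K := by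
          have h2 := mul_mem (inv_mem (zpow_mem hamap m)) hmap'
          rw [show (Hsub C a).subtype h' = (h' : G) from rfl, heq] at h2
          rwa [show (a ^ m)⁻¹ * (a ^ m * d) = d by group] at h2
        rw [show (Hsub C a).subtype h' = (h' : G) from rfl, heq]
        exact mul_mem (Subgroup.mem_sup_left (Subgroup.zpow_mem_zpowers a m))
          (Subgroup.mem_sup_right (Subgroup.mem_inf.2 ⟨hd, hdmap⟩))
      · refine sup_le ?_ inf_le_right
        rw [Subgroup.zpowers_le]
        exact hamap
  · rintro (rfl | ⟨E, hE, hmap⟩)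
    · -- K = ⊥ is convex
      intro x y z hx hz hxy hyz
      rw [Subgroup.mem_bot] at hx hz ⊢
      subst hx; subst hz
      rw [hord] at hxy hyz
      obtain ⟨n, c, hc, he1, hp1⟩ := hxy
      obtain ⟨m, d, hd, he2, hp2⟩ := hyz
      have hy : (y : G) = a ^ n * c := by simpa using he1
      have hyi : (y : G)⁻¹ = a ^ m * d := by simpa using he2
      have hkey : a ^ (-n) * (a ^ n * c⁻¹ * a ^ (-n)) = a ^ m * d := by
        rw [← hyi, hy]; group
      obtain ⟨hnm, hcd⟩ := huniq (conjmem n c⁻¹ (inv_mem hc)) hd hkey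
      exfalso
      rcases hp1 with h1 | ⟨h1, h2⟩ <;> rcases hp2 with h3 | ⟨h3, h4⟩
      · rw [← hcd, ← hconj1 n c⁻¹ (inv_mem hc)] at h3
        have h5 : r c 1 := by
          have := hr.2 1 c⁻¹ c h3
          simpa using this
        exact hr.1.irrefl 1 (hr.1.trans _ _ _ h1 h5)
      · have hc1 : c⁻¹ = 1 := by
          rw [show c⁻¹ = a ^ (-n) * (a ^ n * c⁻¹ * a ^ (-n)) * a ^ n by group,
            hcd, h3]
          group
        rw [inv_eq_one] at hc1
        rw [← hc1] at h1
        exact hr.1.irrefl c h1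
      · rw [h1, show a ^ n * (1 : G)⁻¹ * a ^ (-n) = 1 by group] at hcd
        rw [← hcd] at h3
        exact hr.1.irrefl 1 h3
      · omega
    · -- K = ⟨a⟩ ⊔ E is convex
      intro x y z hx hz hxy hyz
      obtain ⟨hEC, hEconv⟩ := hE
      have hE1 : ∀ c ∈ E, a * c * a⁻¹ ∈ E := fun c hc => (hconvfix E ⟨hEC, hEconv⟩ c).1 hc
      have hE2 : ∀ c ∈ E, a⁻¹ * c * a ∈ E := by
        intro c hc
        apply (hconvfix E ⟨hEC, hEconv⟩ (a⁻¹ * c * a)).2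
        rwa [show a * (a⁻¹ * c * a) * a⁻¹ = c by group]
      have hmemE := aux_mem_sup a E hE1 hE2
      have hxm : (x : G) ∈ Subgroup.zpowers a ⊔ E := by
        rw [← hmap]; exact Subgroup.mem_map.2 ⟨x, hx, rfl⟩
      have hzm : (z : G) ∈ Subgroup.zpowers a ⊔ E := by
        rw [← hmap]; exact Subgroup.mem_map.2 ⟨z, hz, rfl⟩
      obtain ⟨k, u, hu, hxe⟩ := (hmemE _).1 hxm
      obtain ⟨m, v, hv, hze⟩ := (hmemE _).1 hzm
      obtain ⟨n, c, hc, hye⟩ := (hmem (y : G)).1 y.2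
      rw [hord] at hxy hyz
      obtain ⟨n1, d1, hd1, he1, hp1⟩ := hxy
      obtain ⟨n2, d2, hd2, he2, hp2⟩ := hyz
      have key1 : a ^ (n - k) * (a ^ k * (c * u⁻¹) * a ^ (-k)) = a ^ n1 * d1 := by
        rw [← he1, hxe, hye]; group
      obtain ⟨hn1, hd1e⟩ :=
        huniq (conjmem k _ (mul_mem hc (inv_mem (hEC hu)))) hd1 key1
      have key2 : a ^ (m - n) * (a ^ n * (v * c⁻¹) * a ^ (-n)) = a ^ n2 * d2 := by
        rw [← he2, hze, hye]; group
      obtain ⟨hn2, hd2e⟩ :=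
        huniq (conjmem n _ (mul_mem (hEC hv) (inv_mem hc))) hd2 key2
      have hcE : c ∈ E := by
        rcases hp1 with h1 | ⟨h1, _⟩
        · rcases hp2 with h3 | ⟨h3, _⟩
          · have hr1 : r 1 (c * u⁻¹) := by
              rw [hconj1 k _ (mul_mem hc (inv_mem (hEC hu))), hd1e]
              exact h1
            have ruc : r u c := by
              have := hr.2 1 (c * u⁻¹) u hr1
              simpa using this
            have hr2 : r 1 (v * c⁻¹) := by
              rw [hconj1 n _ (mul_mem (hEC hv) (inv_mem hc)), hd2e]
              exact h3
            have rcv : r c v := by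
              have := hr.2 1 (v * c⁻¹) c hr2
              simpa using this
            exact hEconv u c v hu hv hc ruc rcv
          · have hvc : v * c⁻¹ = 1 := by
              rw [show v * c⁻¹ = a ^ (-n) * (a ^ n * (v * c⁻¹) * a ^ (-n)) * a ^ n by group,
                hd2e, h3]
              group
            have : v = c := by rwa [mul_inv_eq_one] at hvc
            rwa [← this]
        · have hcu : c * u⁻¹ = 1 := by
            rw [show c * u⁻¹ = a ^ (-k) * (a ^ k * (c * u⁻¹) * a ^ (-k)) * a ^ k by group,
              hd1e, h1]
            group
          have : c = u := by rwa [mul_inv_eq_one] at hcu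
          rwa [this]
      have hymap : (y : G) ∈ Subgroup.map (Hsub C a).subtype K := by
        rw [hmap, hye]
        exact mul_mem (Subgroup.mem_sup_left (Subgroup.zpow_mem_zpowers a n))
          (Subgroup.mem_sup_right hcE)
      obtain ⟨y', hy'K, hy'e⟩ := Subgroup.mem_map.1 hymap
      rwa [show y' = y from Subtype.ext hy'e] at hy'K
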